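/- Let p be a prime, k ≥ 0 and l ≥ 1, and set f_{k,l}(X) = (X^{p^{k+l}} − 1)/(X^{p^k} − 1) ∈ ℤ[X] and A_{k,l} = ℤ[X]/(f_{k,l}). Since f_{k,l}(X^p) = f_{k+1,l}(X), there is a well-defined ring homomorphism A_{k,l} → A_{k+1,l} sending the class of X to the class of X^p. With respect to this algebra structure, A_{k+1,l} is a free A_{k,l}-module of rank p. -/

import Mathlib

open Polynomial

noncomputable section

/-- Let `p` be a prime, `k ≥ 0`, `l ≥ 1`, and let
`f = f_{k,l} = (X^{p^{k+l}} - 1)/(X^{p^k} - 1)` and `g = f_{k+1,l}` in `ℤ[X]`, and put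
`A_{k,l} = ℤ[X]/(f)`, `A_{k+1,l} = ℤ[X]/(g)`. Since `f_{k,l}(X^p) = f_{k+1,l}(X)`, there
is a well-defined ring homomorphism `A_{k,l} → A_{k+1,l}` sending the class of `X` to the
class of `X^p`, and with respect to this algebra structure `A_{k+1,l}` is a free
`A_{k,l}`-module of rank `p`. -/
theorem statement13 (p : ℕ) (hp : p.Prime) (k l : ℕ) (hl : 1 ≤ l)
    (f g : Polynomial ℤ)
    (hf : f * (Polynomial.X ^ (p ^ k) - 1) = Polynomial.X ^ (p ^ (k + l)) - 1)
    (hg : g * (Polynomial.X ^ (p ^ (k + 1)) - 1) = Polynomial.X ^ (p ^ (k + 1 + l)) - 1) :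
    ∃ φ : (Polynomial ℤ ⧸ Ideal.span {f}) →+* (Polynomial ℤ ⧸ Ideal.span {g}),
      φ (Ideal.Quotient.mk (Ideal.span {f}) Polynomial.X) =
        Ideal.Quotient.mk (Ideal.span {g}) (Polynomial.X ^ p) ∧
      @Module.Free (Polynomial ℤ ⧸ Ideal.span {f}) (Polynomial ℤ ⧸ Ideal.span {g}) _ _
        (Module.compHom (Polynomial ℤ ⧸ Ideal.span {g}) φ) ∧
      @Module.finrank (Polynomial ℤ ⧸ Ideal.span {f}) (Polynomial ℤ ⧸ Ideal.span {g}) _ _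
        (Module.compHom (Polynomial ℤ ⧸ Ideal.span {g}) φ) = p := by
  have hp1 : 1 < p := hp.one_lt
  have hmonX : ∀ n : ℕ, n ≠ 0 → ((X : ℤ[X]) ^ n - 1).Monic := by
    intro n hn
    simpa using monic_X_pow_sub_C (1 : ℤ) hn
  -- g = f.comp (X ^ p)
  have hcomp : g = f.comp (X ^ p) := by
    have h1 : f.comp (X ^ p) * ((X : ℤ[X]) ^ (p ^ (k + 1)) - 1) = X ^ (p ^ (k + 1 + l)) - 1 := by
      have h := congrArg (fun q : ℤ[X] => q.comp (X ^ p)) hf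
      simp only [mul_comp, sub_comp, one_comp, X_pow_comp, ← pow_mul] at h
      rw [show p * p ^ k = p ^ (k + 1) from (pow_succ' p k).symm,
        show p * p ^ (k + l) = p ^ (k + 1 + l) by rw [← pow_succ', show k + l + 1 = k + 1 + l by ring]] at h
      exact h
    have hne : ((X : ℤ[X]) ^ (p ^ (k + 1)) - 1) ≠ 0 :=
      (hmonX _ (pow_ne_zero _ hp.ne_zero)).ne_zero
    exact mul_right_cancel₀ hne (hg.trans h1.symm)
  -- f is monic of positive degree
  have hfmon : f.Monic := by
    have h2 := hmonX _ (pow_ne_zero (k + l) hp.ne_zero)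
    rw [← hf] at h2
    exact (hmonX _ (pow_ne_zero k hp.ne_zero)).of_mul_monic_right h2
  have hfdeg : 0 < f.natDegree := by
    have h3 : f.natDegree + p ^ k = p ^ (k + l) := by
      have := congrArg natDegree hf
      rwa [natDegree_mul hfmon.ne_zero (hmonX _ (pow_ne_zero k hp.ne_zero)).ne_zero,
        show ((X : ℤ[X]) ^ (p ^ k) - 1).natDegree = p ^ k by
          simpa using natDegree_X_pow_sub_C (R := ℤ) (n := p ^ k) (r := 1),
        show ((X : ℤ[X]) ^ (p ^ (k + l)) - 1).natDegree = p ^ (k + l) by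
          simpa using natDegree_X_pow_sub_C (R := ℤ) (n := p ^ (k + l)) (r := 1)] at this
    have hlt : p ^ k < p ^ (k + l) := by
      exact Nat.pow_lt_pow_right hp1 (by omega)
    omega
  haveI hR : Nontrivial (AdjoinRoot f) := by
    rw [AdjoinRoot]
    refine Ideal.Quotient.nontrivial_iff.mpr ?_
    rw [Ne, Ideal.span_singleton_eq_top]
    exact not_isUnit_of_natDegree_pos f hfdeg
  -- the ring hom ψ : AdjoinRoot f →+* AdjoinRoot g, root f ↦ (root g)^p
  have hfg : (aeval ((AdjoinRoot.root g) ^ p)) f = 0 := by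
    have h4 : aeval (AdjoinRoot.root g) (f.comp (X ^ p)) = aeval ((AdjoinRoot.root g) ^ p) f := by
      rw [aeval_comp]; simp
    rw [← h4, ← hcomp, AdjoinRoot.aeval_eq, AdjoinRoot.mk_self]
  set ψ : AdjoinRoot f →+* AdjoinRoot g :=
    AdjoinRoot.lift (Int.castRingHom (AdjoinRoot g)) ((AdjoinRoot.root g) ^ p)
      (by rw [← algebraMap_int_eq, ← aeval_def]; exact hfg) with hψdef
  have hψroot : ψ (AdjoinRoot.root f) = (AdjoinRoot.root g) ^ p := AdjoinRoot.lift_root _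
  refine ⟨ψ, ?_, ?_⟩
  · show ψ (AdjoinRoot.root f) = AdjoinRoot.mk g (X ^ p)
    rw [hψroot, map_pow, AdjoinRoot.mk_X]
  -- algebra structure via ψ
  letI : Algebra (AdjoinRoot f) (AdjoinRoot g) := ψ.toAlgebra
  set q : (AdjoinRoot f)[X] := X ^ p - C (AdjoinRoot.root f) with hqdef
  have hqm : q.Monic := monic_X_pow_sub_C _ hp.ne_zero
  have hq0 : aeval (AdjoinRoot.root g) q = 0 := by
    rw [hqdef, map_sub, map_pow, aeval_X, aeval_C, RingHom.algebraMap_toAlgebra, hψroot, sub_self]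
  have h6 : aeval (AdjoinRoot.root q) q = 0 := by
    rw [AdjoinRoot.aeval_eq, AdjoinRoot.mk_self]
  have hrootq : (AdjoinRoot.root q) ^ p
      = algebraMap (AdjoinRoot f) (AdjoinRoot q) (AdjoinRoot.root f) := by
    rw [hqdef, map_sub, map_pow, aeval_X, aeval_C, sub_eq_zero] at h6
    exact h6
  have h7 : aeval (AdjoinRoot.root q) g = 0 := by
    rw [hcomp, aeval_comp]
    simp only [map_pow, aeval_X]
    rw [hrootq,
      show (algebraMap (AdjoinRoot f) (AdjoinRoot q)) (AdjoinRoot.root f)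
        = (algebraMap (AdjoinRoot f) (AdjoinRoot q)).toIntAlgHom (AdjoinRoot.root f) from rfl,
      aeval_algHom_apply, AdjoinRoot.aeval_eq, AdjoinRoot.mk_self, map_zero]
  set χ : AdjoinRoot g →+* AdjoinRoot q :=
    AdjoinRoot.lift (Int.castRingHom _) (AdjoinRoot.root q)
      (by rw [← algebraMap_int_eq, ← aeval_def]; exact h7) with hχdef
  have hχroot : χ (AdjoinRoot.root g) = AdjoinRoot.root q := AdjoinRoot.lift_root _
  have hcommute : ∀ r : AdjoinRoot f, χ (ψ r) = algebraMap (AdjoinRoot f) (AdjoinRoot q) r := by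
    have hext : (χ.comp ψ).toIntAlgHom
        = (algebraMap (AdjoinRoot f) (AdjoinRoot q)).toIntAlgHom := by
      apply AdjoinRoot.algHom_ext
      show χ (ψ (AdjoinRoot.root f)) = algebraMap (AdjoinRoot f) (AdjoinRoot q) (AdjoinRoot.root f)
      rw [hψroot, map_pow, hχroot, hrootq]
    intro r
    exact DFunLike.congr_fun hext r
  set forward : AdjoinRoot q →ₐ[AdjoinRoot f] AdjoinRoot g :=
    AdjoinRoot.liftAlgHom q (Algebra.ofId _ _) (AdjoinRoot.root g)
      (by change aeval (AdjoinRoot.root g) q = 0; exact hq0) with hfwd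
  set backward : AdjoinRoot g →ₐ[AdjoinRoot f] AdjoinRoot q := ⟨χ, hcommute⟩ with hbwd
  have h1 : forward.comp backward = AlgHom.id _ _ := by
    apply AlgHom.ext
    intro s
    have hext : ((forward : AdjoinRoot q →+* AdjoinRoot g).comp χ).toIntAlgHom
        = (RingHom.id (AdjoinRoot g)).toIntAlgHom := by
      apply AdjoinRoot.algHom_ext
      show forward (χ (AdjoinRoot.root g)) = AdjoinRoot.root g
      rw [hχroot, hfwd, AdjoinRoot.liftAlgHom_root]
    exact DFunLike.congr_fun hext s
  have h2 : backward.comp forward = AlgHom.id _ _ := by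
    apply AdjoinRoot.algHom_ext
    show χ (forward (AdjoinRoot.root q)) = AdjoinRoot.root q
    rw [hfwd, AdjoinRoot.liftAlgHom_root, hχroot]
  set e : AdjoinRoot q ≃ₐ[AdjoinRoot f] AdjoinRoot g := AlgEquiv.ofAlgHom forward backward h1 h2
  set pb : PowerBasis (AdjoinRoot f) (AdjoinRoot g) := (AdjoinRoot.powerBasis' hqm).map e
  have hdim : pb.dim = p := by
    show q.natDegree = p
    rw [hqdef]; exact natDegree_X_pow_sub_C
  constructor
  · exact @Module.Free.of_basis (AdjoinRoot f) (AdjoinRoot g) _ _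
      (Module.compHom (AdjoinRoot g) ψ) _ pb.basis
  · exact pb.finrank.trans hdim
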